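/- Let $a_n = \frac{1}{n+1}$ and let $d_n^{(k)}$ be the determinant of the $n \times n$ generalized Hilbert matrix with $(i,j)$-entry $\frac{1}{i+j+k-1}$. Then $d_n^{(k)} = \frac{\prod_{i=1}^{n-1}(i!)^2}{\prod_{i=1}^{n}\prod_{j=1}^{n}(i+j+k-1)}$. -/

import Mathlib

open Finset Matrix

private def Hm (n k : ℕ) : Matrix (Fin n) (Fin n) ℚ :=
  Matrix.of fun i j : Fin n => (1 : ℚ) / ((i : ℕ) + (j : ℕ) + k + 1)

private def Vv (n : ℕ) : Fin (n+1) → ℚ := fun i => if i = 0 then 1 else -((i : ℕ) : ℚ)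
private def Cc (n k : ℕ) : Fin (n+1) → ℚ := fun j => 1 / ((j : ℕ) + k + 1)
private def Uu (n k : ℕ) : Fin (n+1) → ℚ := fun i => if i = 0 then 1 else 1 / ((i : ℕ) + k + 1)

private def M2 (n k : ℕ) : Matrix (Fin (n+1)) (Fin (n+1)) ℚ :=
  Matrix.of fun i j => if i = 0 then (1:ℚ) else 1 / ((i : ℕ) + (j : ℕ) + k + 1)

private def M4 (n k : ℕ) : Matrix (Fin (n+1)) (Fin (n+1)) ℚ :=
  Matrix.of fun i j => if i = 0 then (if j = 0 then (1:ℚ) else 0)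
    else if j = 0 then 1 else 1 / ((i : ℕ) + (j : ℕ) + k + 1)

private lemma step1 (n k : ℕ) :
    (Hm (n+1) k).det
      = (Matrix.of fun i j : Fin (n+1) =>
          Vv n i * (Matrix.of fun i j : Fin (n+1) => Cc n k j * M2 n k i j) i j).det := by
  apply Matrix.det_eq_of_forall_row_eq_smul_add_const
    (fun i : Fin (n+1) => if i = 0 then 0 else (1:ℚ)) 0 (by simp)
  intro i j
  by_cases hi : i = 0
  · subst hi; simp [Hm, M2, Vv, Cc]
  · have h1 : ((i : ℕ) : ℚ) + (j : ℕ) + k + 1 ≠ 0 := by positivity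
    have h2 : ((j : ℕ) : ℚ) + k + 1 ≠ 0 := by positivity
    simp only [Hm, M2, Vv, Cc, Matrix.of_apply, if_neg hi, if_pos rfl, one_mul, eq_self_iff_true, if_true,
      Fin.val_zero, Nat.cast_zero]
    field_simp
    ring

private lemma step4 (n k : ℕ) :
    (M2 n k).det
      = (Matrix.of fun i j : Fin (n+1) =>
          Uu n k i * (Matrix.of fun i j : Fin (n+1) => Vv n j * M4 n k i j) i j).det := by
  rw [← Matrix.det_transpose (M2 n k), ← Matrix.det_transpose (Matrix.of _)]
  apply Matrix.det_eq_of_forall_row_eq_smul_add_const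
    (fun j : Fin (n+1) => if j = 0 then 0 else (1:ℚ)) 0 (by simp)
  intro p q
  by_cases hp : p = 0
  · subst hp
    by_cases hq : q = 0 <;> simp [M2, M4, Uu, Vv, hq]
  · by_cases hq : q = 0
    · subst hq; simp [M2, M4, Uu, Vv, hp]
    · have h1 : ((q : ℕ) : ℚ) + (p : ℕ) + k + 1 ≠ 0 := by positivity
      have h2 : ((q : ℕ) : ℚ) + k + 1 ≠ 0 := by positivity
      simp only [M2, M4, Uu, Vv, Matrix.transpose_apply, Matrix.of_apply, if_neg hp, if_neg hq,
        if_pos rfl, one_mul, mul_one, eq_self_iff_true, if_true, Fin.val_zero, Nat.cast_zero]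
      field_simp
      ring

private lemma step6 (n k : ℕ) : (M4 n k).det = (Hm n (k+2)).det := by
  rw [Matrix.det_succ_row_zero]
  rw [Finset.sum_eq_single (0 : Fin (n+1))]
  · have h00 : M4 n k 0 0 = 1 := by simp [M4]
    have hsub : (M4 n k).submatrix Fin.succ Fin.succ = Hm n (k+2) := by
      ext i j
      simp only [Matrix.submatrix_apply, M4, Hm, Matrix.of_apply, Fin.succ_ne_zero, if_neg,
        Fin.val_succ]
      push_cast
      ring_nf
    rw [Fin.succAbove_zero, h00, hsub, Fin.val_zero, pow_zero, one_mul]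
    exact one_mul _
  · intro j _ hj
    simp [M4, hj]
  · simp

private lemma prod_Vv (n : ℕ) :
    (∏ i, Vv n i) = (-1 : ℚ) ^ n * n.factorial := by
  rw [Fin.prod_univ_succ]
  simp only [Vv, eq_self_iff_true, if_true, one_mul, Fin.succ_ne_zero, ite_false, Fin.val_succ]
  have : ∀ i : Fin n, -((((i : ℕ) + 1 : ℕ)) : ℚ) = (-1) * (((i : ℕ) : ℚ) + 1) := by
    intro i; push_cast; ring
  rw [Finset.prod_congr rfl fun i _ => this i, Finset.prod_mul_distrib, Finset.prod_const,
    Finset.card_univ, Fintype.card_fin,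
    Fin.prod_univ_eq_prod_range (fun i => ((i : ℚ) + 1)) n,
    ← Finset.prod_range_add_one_eq_factorial]
  push_cast
  ring

private lemma prod_Cc (n k : ℕ) :
    (∏ j, Cc n k j) = (∏ j ∈ Finset.range (n+1), ((j : ℚ) + k + 1))⁻¹ := by
  simp only [Cc]
  rw [Fin.prod_univ_eq_prod_range (fun j => (1:ℚ) / ((j : ℚ) + k + 1)) (n+1),
    ← Finset.prod_inv_distrib]
  simp [one_div]

private lemma prod_Uu (n k : ℕ) :
    (∏ i, Uu n k i) = (∏ i ∈ Finset.range n, ((i : ℚ) + k + 2))⁻¹ := by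
  rw [Fin.prod_univ_succ]
  simp only [Uu, eq_self_iff_true, if_true, one_mul, Fin.succ_ne_zero, ite_false, Fin.val_succ]
  rw [Fin.prod_univ_eq_prod_range (fun i => (1:ℚ) / (((i + 1 : ℕ) : ℚ) + k + 1)) n,
    ← Finset.prod_inv_distrib]
  apply Finset.prod_congr rfl
  intro i _
  rw [one_div]
  congr 1
  push_cast
  ring

private lemma hilb_rec (n k : ℕ) :
    (Hm (n+1) k).det = ((n.factorial : ℚ)) ^ 2 /
      ((∏ j ∈ Finset.range (n+1), ((j : ℚ) + k + 1)) *
        ∏ i ∈ Finset.range n, ((i : ℚ) + k + 2)) * (Hm n (k+2)).det := by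
  calc (Hm (n+1) k).det
      = (Matrix.of fun i j : Fin (n+1) =>
          Vv n i * (Matrix.of fun i j : Fin (n+1) => Cc n k j * M2 n k i j) i j).det := step1 n k
    _ = (∏ i, Vv n i) * (Matrix.of fun i j : Fin (n+1) => Cc n k j * M2 n k i j).det :=
        Matrix.det_mul_column _ _
    _ = (∏ i, Vv n i) * ((∏ j, Cc n k j) * (M2 n k).det) := by rw [Matrix.det_mul_row]
    _ = (∏ i, Vv n i) * ((∏ j, Cc n k j) *
          ((∏ i, Uu n k i) * ((∏ j, Vv n j) * (M4 n k).det))) := by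
        rw [step4 n k]
        congr 2
        rw [Matrix.det_mul_column]
        congr 1
        exact Matrix.det_mul_row _ _
    _ = ((-1 : ℚ) ^ n * n.factorial) *
          ((∏ j ∈ Finset.range (n+1), ((j : ℚ) + k + 1))⁻¹ *
            ((∏ i ∈ Finset.range n, ((i : ℚ) + k + 2))⁻¹ *
              (((-1 : ℚ) ^ n * n.factorial) * (Hm n (k+2)).det))) := by
        rw [prod_Vv, prod_Cc, prod_Uu, step6]
    _ = _ := by
        have hsign : ((-1 : ℚ) ^ n) * ((-1 : ℚ) ^ n) = 1 := by
          rw [← pow_add, ← two_mul, pow_mul]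
          norm_num
        rw [div_eq_mul_inv, mul_inv]
        linear_combination ((n.factorial : ℚ) ^ 2 *
          (∏ j ∈ Finset.range (n+1), ((j : ℚ) + k + 1))⁻¹ *
          (∏ i ∈ Finset.range n, ((i : ℚ) + k + 2))⁻¹ * (Hm n (k+2)).det) * hsign

private lemma hilb_det (n k : ℕ) :
    (Hm n k).det = (∏ i ∈ Finset.range n, (i.factorial : ℚ)) ^ 2 /
      ∏ i ∈ Finset.range n, ∏ j ∈ Finset.range n, ((i : ℚ) + (j : ℚ) + k + 1) := by
  induction n generalizing k with
  | zero => simp [Hm]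
  | succ n ih =>
    rw [hilb_rec n k, ih (k+2)]
    have hD' : (∏ i ∈ Finset.range n, ∏ j ∈ Finset.range n, ((i:ℚ)+(j:ℚ)+((k+2:ℕ):ℚ)+1))
        = ∏ i ∈ Finset.range n, ∏ j ∈ Finset.range n, ((i:ℚ)+(j:ℚ)+(k:ℚ)+3) :=
      Finset.prod_congr rfl fun i _ => Finset.prod_congr rfl fun j _ => by push_cast; ring
    have h0 : (∏ j ∈ Finset.range (n+1), (((0:ℕ):ℚ)+(j:ℚ)+k+1))
        = ∏ j ∈ Finset.range (n+1), ((j:ℚ)+k+1) :=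
      Finset.prod_congr rfl fun j _ => by push_cast; ring
    have h1 : ∀ i : ℕ, (∏ j ∈ Finset.range (n+1), (((i+1:ℕ):ℚ)+(j:ℚ)+k+1))
        = (∏ j ∈ Finset.range n, ((i:ℚ)+(j:ℚ)+k+3)) * ((i:ℚ)+k+2) := by
      intro i
      rw [Finset.prod_range_succ' (fun j => (((i+1:ℕ):ℚ)+(j:ℚ)+k+1)) n]
      congr 1
      · exact Finset.prod_congr rfl fun j _ => by push_cast; ring
      · push_cast; ring
    have hden : (∏ i ∈ Finset.range (n+1), ∏ j ∈ Finset.range (n+1), ((i:ℚ)+(j:ℚ)+k+1))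
        = ((∏ j ∈ Finset.range (n+1), ((j:ℚ)+k+1)) * ∏ i ∈ Finset.range n, ((i:ℚ)+k+2)) *
          ∏ i ∈ Finset.range n, ∏ j ∈ Finset.range n, ((i:ℚ)+(j:ℚ)+(k:ℚ)+3) := by
      rw [Finset.prod_range_succ' (fun i => ∏ j ∈ Finset.range (n+1), ((i:ℚ)+(j:ℚ)+k+1)) n]
      rw [Finset.prod_congr rfl fun i _ => h1 i, Finset.prod_mul_distrib, h0]
      ring
    have hnum : (∏ i ∈ Finset.range (n+1), (i.factorial : ℚ))
        = (∏ i ∈ Finset.range n, (i.factorial : ℚ)) * n.factorial :=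
      Finset.prod_range_succ _ n
    rw [hD', hden, hnum]
    ring

theorem stmt6 (n k : ℕ) (hn : 1 ≤ n) :
    (Matrix.of fun i j : Fin n => (1 : ℚ) / ((i : ℕ) + (j : ℕ) + k + 1)).det =
      (∏ i ∈ Finset.Icc 1 (n - 1), (i.factorial : ℚ) ^ 2) /
        ∏ i ∈ Finset.Icc 1 n, ∏ j ∈ Finset.Icc 1 n, ((i : ℚ) + j + k - 1) := by
  obtain ⟨m, rfl⟩ : ∃ m, n = m + 1 := ⟨n - 1, by omega⟩
  rw [show (Matrix.of fun i j : Fin (m+1) => (1 : ℚ) / ((i : ℕ) + (j : ℕ) + k + 1))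
      = Hm (m+1) k from rfl, hilb_det]
  congr 1
  · -- numerator
    rw [← Finset.prod_pow]
    rw [Finset.prod_range_succ' (fun i => (i.factorial : ℚ)^2) m]
    simp only [Nat.add_sub_cancel, Nat.factorial_zero, Nat.cast_one, one_pow, mul_one]
    rw [← Finset.Ico_add_one_right_eq_Icc, Finset.prod_Ico_eq_prod_range]
    exact Finset.prod_congr rfl fun i _ => by rw [Nat.add_comm]
  · -- denominator
    rw [← Finset.Ico_add_one_right_eq_Icc, Finset.prod_Ico_eq_prod_range]
    refine Finset.prod_congr rfl fun i _ => ?_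
    rw [Finset.prod_Ico_eq_prod_range]
    refine Finset.prod_congr rfl fun j _ => ?_
    push_cast
    ring
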